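/- Let S be a partially ordered set with a simply connected extension (∼_u, ∼_l). Then for all a, b, c ∈ S, c ∈ B_{a,b} if and only if B_{a,b} = B_{a,c} ∪ B_{c,b}. -/
import Mathlib


open Pointwise

namespace PaperSC

variable {S : Type*}

/-- Exactly one of four propositions holds. -/
def ExactlyOne4 (p q r s : Prop) : Prop :=
  (p ∨ q ∨ r ∨ s) ∧ (p → ¬q ∧ ¬r ∧ ¬s) ∧ (q → ¬r ∧ ¬s) ∧ (r → ¬s)

/-- `x` and `y` are incomparable with respect to the strict order `lt`. -/
def Incomp (lt : S → S → Prop) (x y : S) : Prop :=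
  x ≠ y ∧ ¬ lt x y ∧ ¬ lt y x

/-- The reflexive closure of `lt`. -/
def Le' (lt : S → S → Prop) (x y : S) : Prop := x = y ∨ lt x y

/-- `x ∼ᵤ y` : `x` and `y` are incomparable and have a common upper bound. -/
def SimU (lt : S → S → Prop) (x y : S) : Prop :=
  Incomp lt x y ∧ ∃ z, Le' lt x z ∧ Le' lt y z

/-- `x ∼ₗ y` : `x` and `y` are incomparable and have a common lower bound. -/
def SimL (lt : S → S → Prop) (x y : S) : Prop :=
  Incomp lt x y ∧ ∃ z, Le' lt z x ∧ Le' lt z y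

/-- Every incomparable pair has a common upper bound or a common lower bound. -/
def StronglyConnectedRel (lt : S → S → Prop) : Prop :=
  ∀ x y, Incomp lt x y → SimU lt x y ∨ SimL lt x y

/-- Acyclicity: `x ∼ᵤ y` and `x ∼ₗ z` imply `y < z`. -/
def AcyclicRel (lt : S → S → Prop) : Prop :=
  ∀ x y z, SimU lt x y → SimL lt x z → lt y z

/-- `(u, l)` is a simply connected extension of the strict partial order `lt`. -/
structure IsSCExt (lt u l : S → S → Prop) : Prop where
  u_symm : ∀ x y, u x y → u y x
  l_symm : ∀ x y, l x y → l y x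
  exactly_one : ∀ x y, x ≠ y → ExactlyOne4 (lt x y) (lt y x) (u x y) (l x y)
  u_of_ub : ∀ x y, Incomp lt x y → (∃ z, Le' lt x z ∧ Le' lt y z) → u x y
  l_of_lb : ∀ x y, Incomp lt x y → (∃ z, Le' lt z x ∧ Le' lt z y) → l x y
  acyclic : ∀ x y z, u x y → l x z → lt y z

/-- `b` is between `a` and `c` (with respect to `lt` and the extension `(u, l)`). -/
def Btwn (lt u l : S → S → Prop) (a c b : S) : Prop :=
  (lt a c ∧ ((lt a b ∧ lt b c) ∨ (u a b ∧ l b c))) ∨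
  (lt c a ∧ ((lt c b ∧ lt b a) ∨ (u c b ∧ l b a))) ∨
  (l a c ∧ ((l a b ∧ lt b c) ∨ (l c b ∧ lt b a))) ∨
  (u a c ∧ ((u a b ∧ lt c b) ∨ (u c b ∧ lt a b)))

/-- The between set `B_{a,b}`; it equals `{a}` when `a = b`. -/
def BSet (lt u l : S → S → Prop) (a b : S) : Set S :=
  {a, b} ∪ {x | a ≠ b ∧ Btwn lt u l a b x}

/-- The set `A` is totally ordered by `lt`. -/
def IsChainRel (lt : S → S → Prop) (A : Set S) : Prop :=
  ∀ p ∈ A, ∀ q ∈ A, p = q ∨ lt p q ∨ lt q p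

/-- `x O y` iff `B_{x,y}` is totally ordered by `lt`. -/
def ORel (lt u l : S → S → Prop) (x y : S) : Prop :=
  IsChainRel lt (BSet lt u l x y)

/-- The extension is rectifiable: every between set is a finite union of `O`-classes. -/
def Rectifiable (lt u l : S → S → Prop) : Prop :=
  ∀ a b : S, a ≠ b → ∃ F : Finset S,
    (↑F : Set S) ⊆ BSet lt u l a b ∧
    ∀ x ∈ BSet lt u l a b, ∃ c ∈ F, ORel lt u l x c

section Helpers

variable {lt u l : S → S → Prop}

lemma eo {p q r s : Prop} (h : ExactlyOne4 p q r s) :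
    (p → ¬q ∧ ¬r ∧ ¬s) ∧ (q → ¬p ∧ ¬r ∧ ¬s) ∧ (r → ¬p ∧ ¬q ∧ ¬s) ∧ (s → ¬p ∧ ¬q ∧ ¬r) := by
  unfold ExactlyOne4 at h; tauto

lemma lt_ne (hirr : ∀ x : S, ¬ lt x x) {x y : S} (h : lt x y) : x ≠ y :=
  fun e => hirr x (e ▸ h)

lemma lt_asym (hirr : ∀ x : S, ¬ lt x x) (htr : ∀ {x y z : S}, lt x y → lt y z → lt x z)
    {x y : S} (h : lt x y) : ¬ lt y x := fun h' => hirr x (htr h h')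

lemma rel5 (hsce : IsSCExt lt u l) {x y : S} (hne : x ≠ y) :
    lt x y ∨ lt y x ∨ u x y ∨ l x y := (hsce.exactly_one x y hne).1

lemma lt_not (hirr : ∀ x : S, ¬ lt x x) (hsce : IsSCExt lt u l) {x y : S} (h : lt x y) :
    ¬ u x y ∧ ¬ l x y := by
  have := (eo (hsce.exactly_one x y (lt_ne hirr h))).1 h
  exact ⟨this.2.1, this.2.2⟩

lemma u_not (hsce : IsSCExt lt u l) {x y : S} (hne : x ≠ y) (h : u x y) :
    ¬ lt x y ∧ ¬ lt y x ∧ ¬ l x y := (eo (hsce.exactly_one x y hne)).2.2.1 h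

lemma l_not (hsce : IsSCExt lt u l) {x y : S} (hne : x ≠ y) (h : l x y) :
    ¬ lt x y ∧ ¬ lt y x ∧ ¬ u x y := (eo (hsce.exactly_one x y hne)).2.2.2 h

lemma l_ub_false (hsce : IsSCExt lt u l) {x y z : S} (hne : x ≠ y) (hl : l x y)
    (h1 : lt x z) (h2 : lt y z) : False := by
  have hn := l_not hsce hne hl
  exact hn.2.2 (hsce.u_of_ub x y ⟨hne, hn.1, hn.2.1⟩ ⟨z, Or.inr h1, Or.inr h2⟩)

lemma u_lb_false (hsce : IsSCExt lt u l) {x y z : S} (hne : x ≠ y) (hu : u x y)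
    (h1 : lt z x) (h2 : lt z y) : False := by
  have hn := u_not hsce hne hu
  exact hn.2.2 (hsce.l_of_lb x y ⟨hne, hn.1, hn.2.1⟩ ⟨z, Or.inr h1, Or.inr h2⟩)

lemma mem_bset {a b x : S} :
    x ∈ BSet lt u l a b ↔ x = a ∨ x = b ∨ (a ≠ b ∧ Btwn lt u l a b x) := by
  simp only [BSet, Set.mem_union, Set.mem_insert_iff, Set.mem_singleton_iff, Set.mem_setOf_eq]
  exact or_assoc

lemma left_mem {a b : S} : a ∈ BSet lt u l a b := mem_bset.mpr (Or.inl rfl)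

lemma right_mem {a b : S} : b ∈ BSet lt u l a b := mem_bset.mpr (Or.inr (Or.inl rfl))

lemma bset_self {a : S} : BSet lt u l a a = {a} := by
  ext x; simp [BSet]

lemma mem_lt (hirr : ∀ x : S, ¬ lt x x) (hsce : IsSCExt lt u l) {a b x : S} (hab : lt a b) :
    x ∈ BSet lt u l a b ↔ x = a ∨ x = b ∨ (lt a x ∧ lt x b) ∨ (u a x ∧ l x b) := by
  have hne := lt_ne hirr hab
  have H := (eo (hsce.exactly_one a b hne)).1 hab
  rw [mem_bset]
  constructor
  · rintro (rfl | rfl | ⟨-, (⟨-, h⟩ | ⟨h', -⟩ | ⟨h', -⟩ | ⟨h', -⟩)⟩)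
    · exact Or.inl rfl
    · exact Or.inr (Or.inl rfl)
    · exact Or.inr (Or.inr h)
    · exact absurd h' H.1
    · exact absurd h' H.2.2
    · exact absurd h' H.2.1
  · rintro (rfl | rfl | h)
    · exact Or.inl rfl
    · exact Or.inr (Or.inl rfl)
    · exact Or.inr (Or.inr ⟨hne, Or.inl ⟨hab, h⟩⟩)

lemma mem_l (hsce : IsSCExt lt u l) {a b x : S} (hne : a ≠ b) (hab : l a b) :
    x ∈ BSet lt u l a b ↔ x = a ∨ x = b ∨ (l a x ∧ lt x b) ∨ (l b x ∧ lt x a) := by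
  have H := (eo (hsce.exactly_one a b hne)).2.2.2 hab
  rw [mem_bset]
  constructor
  · rintro (rfl | rfl | ⟨-, (⟨h', -⟩ | ⟨h', -⟩ | ⟨-, h⟩ | ⟨h', -⟩)⟩)
    · exact Or.inl rfl
    · exact Or.inr (Or.inl rfl)
    · exact absurd h' H.1
    · exact absurd h' H.2.1
    · exact Or.inr (Or.inr h)
    · exact absurd h' H.2.2
  · rintro (rfl | rfl | h)
    · exact Or.inl rfl
    · exact Or.inr (Or.inl rfl)
    · exact Or.inr (Or.inr ⟨hne, Or.inr (Or.inr (Or.inl ⟨hab, h⟩))⟩)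

lemma mem_u (hsce : IsSCExt lt u l) {a b x : S} (hne : a ≠ b) (hab : u a b) :
    x ∈ BSet lt u l a b ↔ x = a ∨ x = b ∨ (u a x ∧ lt b x) ∨ (u b x ∧ lt a x) := by
  have H := (eo (hsce.exactly_one a b hne)).2.2.1 hab
  rw [mem_bset]
  constructor
  · rintro (rfl | rfl | ⟨-, (⟨h', -⟩ | ⟨h', -⟩ | ⟨h', -⟩ | ⟨-, h⟩)⟩)
    · exact Or.inl rfl
    · exact Or.inr (Or.inl rfl)
    · exact absurd h' H.1
    · exact absurd h' H.2.1
    · exact absurd h' H.2.2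
    · exact Or.inr (Or.inr h)
  · rintro (rfl | rfl | h)
    · exact Or.inl rfl
    · exact Or.inr (Or.inl rfl)
    · exact Or.inr (Or.inr ⟨hne, Or.inr (Or.inr (Or.inr ⟨hab, h⟩))⟩)

lemma btwn_comm_mp (hsce : IsSCExt lt u l) {a b x : S}
    (h : Btwn lt u l a b x) : Btwn lt u l b a x := by
  rcases h with ⟨h, h2⟩ | ⟨h, h2⟩ | ⟨h, h2⟩ | ⟨h, h2⟩
  · exact Or.inr (Or.inl ⟨h, h2⟩)
  · exact Or.inl ⟨h, h2⟩
  · exact Or.inr (Or.inr (Or.inl ⟨hsce.l_symm _ _ h, h2.symm⟩))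
  · exact Or.inr (Or.inr (Or.inr ⟨hsce.u_symm _ _ h, h2.symm⟩))

lemma btwn_comm (hsce : IsSCExt lt u l) {a b x : S} :
    Btwn lt u l a b x ↔ Btwn lt u l b a x :=
  ⟨btwn_comm_mp hsce, btwn_comm_mp hsce⟩

lemma bset_comm (hsce : IsSCExt lt u l) {a b : S} :
    BSet lt u l a b = BSet lt u l b a := by
  ext x
  rw [mem_bset, mem_bset]
  constructor
  · rintro (h | h | ⟨hne, hb⟩)
    · exact Or.inr (Or.inl h)
    · exact Or.inl h
    · exact Or.inr (Or.inr ⟨Ne.symm hne, btwn_comm_mp hsce hb⟩)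
  · rintro (h | h | ⟨hne, hb⟩)
    · exact Or.inr (Or.inl h)
    · exact Or.inl h
    · exact Or.inr (Or.inr ⟨Ne.symm hne, btwn_comm_mp hsce hb⟩)

lemma sce_dual (hsce : IsSCExt lt u l) : IsSCExt (flip lt) l u := by
  refine ⟨hsce.l_symm, hsce.u_symm, ?_, ?_, ?_, ?_⟩
  · intro x y hne
    have := hsce.exactly_one x y hne
    unfold ExactlyOne4 at this ⊢
    unfold flip
    tauto
  · rintro x y hinc ⟨z, hx, hy⟩
    exact hsce.l_of_lb x y ⟨hinc.1, hinc.2.2, hinc.2.1⟩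
      ⟨z, hx.imp Eq.symm id, hy.imp Eq.symm id⟩
  · rintro x y hinc ⟨z, hx, hy⟩
    exact hsce.u_of_ub x y ⟨hinc.1, hinc.2.2, hinc.2.1⟩
      ⟨z, hx.imp Eq.symm id, hy.imp Eq.symm id⟩
  · intro x y z h1 h2
    exact hsce.acyclic x z y h2 h1

lemma btwn_dual_mp (hsce : IsSCExt lt u l) {a b x : S}
    (h : Btwn (flip lt) l u a b x) : Btwn lt u l a b x := by
  rcases h with ⟨h, ⟨p, q⟩ | ⟨p, q⟩⟩ | ⟨h, ⟨p, q⟩ | ⟨p, q⟩⟩ | ⟨h, hh⟩ | ⟨h, hh⟩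
  · exact Or.inr (Or.inl ⟨h, Or.inl ⟨q, p⟩⟩)
  · exact Or.inr (Or.inl ⟨h, Or.inr ⟨hsce.u_symm _ _ q, hsce.l_symm _ _ p⟩⟩)
  · exact Or.inl ⟨h, Or.inl ⟨q, p⟩⟩
  · exact Or.inl ⟨h, Or.inr ⟨hsce.u_symm _ _ q, hsce.l_symm _ _ p⟩⟩
  · exact Or.inr (Or.inr (Or.inr ⟨h, hh⟩))
  · exact Or.inr (Or.inr (Or.inl ⟨h, hh⟩))

lemma btwn_dual (hsce : IsSCExt lt u l) {a b x : S} :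
    Btwn (flip lt) l u a b x ↔ Btwn lt u l a b x :=
  ⟨btwn_dual_mp hsce, btwn_dual_mp (sce_dual hsce)⟩

lemma bset_dual (hsce : IsSCExt lt u l) {a b : S} :
    BSet (flip lt) l u a b = BSet lt u l a b := by
  ext x
  rw [mem_bset, mem_bset, btwn_dual hsce]

end Helpers
section Cases

variable {lt u l : S → S → Prop}

lemma caselt1 (hirr : ∀ x : S, ¬ lt x x) (htr : ∀ {x y z : S}, lt x y → lt y z → lt x z)
    (hsce : IsSCExt lt u l) {a b c : S} (hab : lt a b) (h1 : lt a c) (h2 : lt c b) :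
    BSet lt u l a b = BSet lt u l a c ∪ BSet lt u l c b := by
  have Nab := lt_not hirr hsce hab
  have N1 := lt_not hirr hsce h1
  have N2 := lt_not hirr hsce h2
  apply Set.Subset.antisymm
  · intro x hx
    rcases (mem_lt hirr hsce hab).mp hx with rfl | rfl | ⟨hax, hxb⟩ | ⟨hax, hxb⟩
    · exact Or.inl left_mem
    · exact Or.inr right_mem
    · rcases eq_or_ne x c with rfl | hxc
      · exact Or.inl right_mem
      rcases rel5 hsce hxc with h | h | h | h
      · exact Or.inl ((mem_lt hirr hsce h1).mpr (Or.inr (Or.inr (Or.inl ⟨hax, h⟩))))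
      · exact Or.inr ((mem_lt hirr hsce h2).mpr (Or.inr (Or.inr (Or.inl ⟨h, hxb⟩))))
      · exact (u_lb_false hsce hxc h hax h1).elim
      · exact (l_ub_false hsce hxc h hxb h2).elim
    · have hxa : x ≠ a := by rintro rfl; exact Nab.2 hxb
      have hxbne : x ≠ b := by rintro rfl; exact Nab.1 hax
      rcases eq_or_ne x c with rfl | hxc
      · exact Or.inl right_mem
      rcases rel5 hsce hxc with h | h | h | h
      · exact ((l_not hsce hxbne hxb).1 (htr h h2)).elim
      · exact ((u_not hsce (Ne.symm hxa) hax).1 (htr h1 h)).elim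
      · exact Or.inr ((mem_lt hirr hsce h2).mpr
          (Or.inr (Or.inr (Or.inr ⟨hsce.u_symm x c h, hxb⟩))))
      · exact Or.inl ((mem_lt hirr hsce h1).mpr (Or.inr (Or.inr (Or.inr ⟨hax, h⟩))))
  · rintro x (hx | hx)
    · rcases (mem_lt hirr hsce h1).mp hx with rfl | rfl | ⟨hax, hxc⟩ | ⟨hax, hxc⟩
      · exact left_mem
      · exact (mem_lt hirr hsce hab).mpr (Or.inr (Or.inr (Or.inl ⟨h1, h2⟩)))
      · exact (mem_lt hirr hsce hab).mpr (Or.inr (Or.inr (Or.inl ⟨hax, htr hxc h2⟩)))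
      · have hxa : x ≠ a := by rintro rfl; exact N1.2 hxc
        have hxcne : x ≠ c := by rintro rfl; exact N1.1 hax
        have hxbne : x ≠ b := by
          rintro rfl; exact (l_not hsce (Ne.symm (lt_ne hirr h2)) hxc).2.1 h2
        rcases rel5 hsce hxbne with H | H | H | H
        · exact (l_ub_false hsce hxcne hxc H h2).elim
        · exact ((u_not hsce (Ne.symm hxa) hax).1 (htr hab H)).elim
        · exact ((lt_asym hirr htr h2) (hsce.acyclic x b c H hxc)).elim
        · exact (mem_lt hirr hsce hab).mpr (Or.inr (Or.inr (Or.inr ⟨hax, H⟩)))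
    · rcases (mem_lt hirr hsce h2).mp hx with rfl | rfl | ⟨hcx, hxb⟩ | ⟨hcx, hxb⟩
      · exact (mem_lt hirr hsce hab).mpr (Or.inr (Or.inr (Or.inl ⟨h1, h2⟩)))
      · exact right_mem
      · exact (mem_lt hirr hsce hab).mpr (Or.inr (Or.inr (Or.inl ⟨htr h1 hcx, hxb⟩)))
      · have hxc : x ≠ c := by rintro rfl; exact N2.2 hxb
        have hxa : x ≠ a := by rintro rfl; exact Nab.2 hxb
        have hxbne : x ≠ b := by rintro rfl; exact N2.1 hcx
        rcases rel5 hsce (Ne.symm hxa) with H | H | H | H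
        · exact (u_lb_false hsce (Ne.symm hxc) hcx h1 H).elim
        · exact ((l_not hsce hxbne hxb).1 (htr H hab)).elim
        · exact (mem_lt hirr hsce hab).mpr (Or.inr (Or.inr (Or.inr ⟨H, hxb⟩)))
        · exact ((lt_asym hirr htr h1)
            (hsce.acyclic x c a (hsce.u_symm c x hcx) (hsce.l_symm a x H))).elim

lemma caselt2 (hirr : ∀ x : S, ¬ lt x x) (htr : ∀ {x y z : S}, lt x y → lt y z → lt x z)
    (hsce : IsSCExt lt u l) {a b c : S} (hab : lt a b) (h1 : u a c) (h2 : l c b) :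
    BSet lt u l a b = BSet lt u l a c ∪ BSet lt u l c b := by
  have Nab := lt_not hirr hsce hab
  have hacne : a ≠ c := by rintro rfl; exact Nab.2 h2
  have hcbne : c ≠ b := by rintro rfl; exact Nab.1 h1
  have N1 := u_not hsce hacne h1
  have N2 := l_not hsce hcbne h2
  apply Set.Subset.antisymm
  · intro x hx
    rcases (mem_lt hirr hsce hab).mp hx with rfl | rfl | ⟨hax, hxb⟩ | ⟨hax, hxb⟩
    · exact Or.inl left_mem
    · exact Or.inr right_mem
    · have hxc : x ≠ c := by rintro rfl; exact N1.1 hax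
      rcases rel5 hsce hxc with h | h | h | h
      · exact (N1.1 (htr hax h)).elim
      · exact (N2.1 (htr h hxb)).elim
      · exact Or.inl ((mem_u hsce hacne h1).mpr
          (Or.inr (Or.inr (Or.inr ⟨hsce.u_symm x c h, hax⟩))))
      · exact Or.inr ((mem_l hsce hcbne h2).mpr
          (Or.inr (Or.inr (Or.inl ⟨hsce.l_symm x c h, hxb⟩))))
    · have hxa : x ≠ a := by rintro rfl; exact Nab.2 hxb
      have hxbne : x ≠ b := by rintro rfl; exact Nab.1 hax
      rcases eq_or_ne x c with rfl | hxc
      · exact Or.inl right_mem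
      rcases rel5 hsce hxc with h | h | h | h
      · exact Or.inr ((mem_l hsce hcbne h2).mpr
          (Or.inr (Or.inr (Or.inr ⟨hsce.l_symm x b hxb, h⟩))))
      · exact Or.inl ((mem_u hsce hacne h1).mpr (Or.inr (Or.inr (Or.inl ⟨hax, h⟩))))
      · exact (N2.1 (hsce.acyclic x c b h hxb)).elim
      · exact (N1.1 (hsce.acyclic x a c (hsce.u_symm a x hax) h)).elim
  · rintro x (hx | hx)
    · rcases (mem_u hsce hacne h1).mp hx with rfl | rfl | ⟨hax, hcx⟩ | ⟨hcx, hax⟩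
      · exact left_mem
      · exact (mem_lt hirr hsce hab).mpr (Or.inr (Or.inr (Or.inr ⟨h1, h2⟩)))
      · have hxa : x ≠ a := by rintro rfl; exact N1.2.1 hcx
        have hxbne : x ≠ b := by rintro rfl; exact N2.1 hcx
        rcases rel5 hsce hxbne with H | H | H | H
        · exact (N2.1 (htr hcx H)).elim
        · exact ((u_not hsce (Ne.symm hxa) hax).1 (htr hab H)).elim
        · exact ((lt_asym hirr htr hcx)
            (hsce.acyclic b x c (hsce.u_symm x b H) (hsce.l_symm c b h2))).elim
        · exact (mem_lt hirr hsce hab).mpr (Or.inr (Or.inr (Or.inr ⟨hax, H⟩)))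
      · exact (mem_lt hirr hsce hab).mpr
          (Or.inr (Or.inr (Or.inl ⟨hax, hsce.acyclic c x b hcx h2⟩)))
    · rcases (mem_l hsce hcbne h2).mp hx with rfl | rfl | ⟨hcx, hxb⟩ | ⟨hbx, hxc⟩
      · exact (mem_lt hirr hsce hab).mpr (Or.inr (Or.inr (Or.inr ⟨h1, h2⟩)))
      · exact right_mem
      · exact (mem_lt hirr hsce hab).mpr
          (Or.inr (Or.inr (Or.inl ⟨hsce.acyclic c a x (hsce.u_symm a c h1) hcx, hxb⟩)))
      · have hxa : x ≠ a := by rintro rfl; exact N1.1 hxc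
        rcases rel5 hsce (Ne.symm hxa) with H | H | H | H
        · exact (N1.1 (htr H hxc)).elim
        · exact (u_lb_false hsce hacne h1 H hxc).elim
        · exact (mem_lt hirr hsce hab).mpr
            (Or.inr (Or.inr (Or.inr ⟨H, hsce.l_symm b x hbx⟩)))
        · exact ((lt_asym hirr htr hxc) (hsce.acyclic a c x h1 H)).elim

lemma casel (hirr : ∀ x : S, ¬ lt x x) (htr : ∀ {x y z : S}, lt x y → lt y z → lt x z)
    (hsce : IsSCExt lt u l) {a b c : S} (hne : a ≠ b) (hab : l a b)
    (h1 : l a c) (h2 : lt c b) :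
    BSet lt u l a b = BSet lt u l a c ∪ BSet lt u l c b := by
  have Na := l_not hsce hne hab
  have hac : a ≠ c := by rintro rfl; exact Na.1 h2
  have N1 := l_not hsce hac h1
  have N2 := lt_not hirr hsce h2
  apply Set.Subset.antisymm
  · intro x hx
    rcases (mem_l hsce hne hab).mp hx with rfl | rfl | ⟨hax, hxb⟩ | ⟨hbx, hxa⟩
    · exact Or.inl left_mem
    · exact Or.inr right_mem
    · rcases eq_or_ne x c with rfl | hxc
      · exact Or.inl right_mem
      rcases rel5 hsce hxc with h | h | h | h
      · exact Or.inl ((mem_l hsce hac h1).mpr (Or.inr (Or.inr (Or.inl ⟨hax, h⟩))))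
      · exact Or.inr ((mem_lt hirr hsce h2).mpr (Or.inr (Or.inr (Or.inl ⟨h, hxb⟩))))
      · exact (N1.2.1 (hsce.acyclic x c a h (hsce.l_symm a x hax))).elim
      · exact (l_ub_false hsce hxc h hxb h2).elim
    · have hxc : x ≠ c := by rintro rfl; exact N1.2.1 hxa
      have hbxne : b ≠ x := by rintro rfl; exact Na.2.1 hxa
      rcases rel5 hsce hxc with h | h | h | h
      · exact ((l_not hsce hbxne hbx).2.1 (htr h h2)).elim
      · exact (N1.2.1 (htr h hxa)).elim
      · exact Or.inr ((mem_lt hirr hsce h2).mpr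
          (Or.inr (Or.inr (Or.inr ⟨hsce.u_symm x c h, hsce.l_symm b x hbx⟩))))
      · exact Or.inl ((mem_l hsce hac h1).mpr
          (Or.inr (Or.inr (Or.inr ⟨hsce.l_symm x c h, hxa⟩))))
  · rintro x (hx | hx)
    · rcases (mem_l hsce hac h1).mp hx with rfl | rfl | ⟨hax, hxc⟩ | ⟨hcx, hxa⟩
      · exact left_mem
      · exact (mem_l hsce hne hab).mpr (Or.inr (Or.inr (Or.inl ⟨h1, h2⟩)))
      · exact (mem_l hsce hne hab).mpr (Or.inr (Or.inr (Or.inl ⟨hax, htr hxc h2⟩)))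
      · have hbxne : b ≠ x := by rintro rfl; exact Na.2.1 hxa
        have hcxne : c ≠ x := by rintro rfl; exact N1.2.1 hxa
        rcases rel5 hsce hbxne with H | H | H | H
        · exact (Na.2.1 (htr H hxa)).elim
        · exact (l_ub_false hsce hcxne hcx h2 H).elim
        · exact ((lt_asym hirr htr h2)
            (hsce.acyclic x b c (hsce.u_symm b x H) (hsce.l_symm c x hcx))).elim
        · exact (mem_l hsce hne hab).mpr (Or.inr (Or.inr (Or.inr ⟨H, hxa⟩)))
    · rcases (mem_lt hirr hsce h2).mp hx with rfl | rfl | ⟨hcx, hxb⟩ | ⟨hcx, hxb⟩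
      · exact (mem_l hsce hne hab).mpr (Or.inr (Or.inr (Or.inl ⟨h1, h2⟩)))
      · exact right_mem
      · have haxne : a ≠ x := by rintro rfl; exact N1.2.1 hcx
        rcases rel5 hsce haxne with H | H | H | H
        · exact (l_ub_false hsce hac h1 H hcx).elim
        · exact (N1.2.1 (htr hcx H)).elim
        · exact ((lt_asym hirr htr hcx) (hsce.acyclic a x c H h1)).elim
        · exact (mem_l hsce hne hab).mpr (Or.inr (Or.inr (Or.inl ⟨H, hxb⟩)))
      · exact (mem_l hsce hne hab).mpr (Or.inr (Or.inr (Or.inr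
          ⟨hsce.l_symm x b hxb, hsce.acyclic c x a hcx (hsce.l_symm a c h1)⟩)))

end Cases
section Main

variable {lt u l : S → S → Prop}

lemma case_lt (hirr : ∀ x : S, ¬ lt x x) (htr : ∀ {x y z : S}, lt x y → lt y z → lt x z)
    (hsce : IsSCExt lt u l) {a b c : S} (hab : lt a b) (hb : Btwn lt u l a b c) :
    BSet lt u l a b = BSet lt u l a c ∪ BSet lt u l c b := by
  rcases hb with ⟨_, h⟩ | ⟨hba, _⟩ | ⟨hl', _⟩ | ⟨hu', _⟩
  · rcases h with ⟨p, q⟩ | ⟨p, q⟩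
    · exact caselt1 hirr htr hsce hab p q
    · exact caselt2 hirr htr hsce hab p q
  · exact absurd hba (lt_asym hirr htr hab)
  · exact absurd hl' (lt_not hirr hsce hab).2
  · exact absurd hu' (lt_not hirr hsce hab).1

lemma case_l (hirr : ∀ x : S, ¬ lt x x) (htr : ∀ {x y z : S}, lt x y → lt y z → lt x z)
    (hsce : IsSCExt lt u l) {a b c : S} (hne : a ≠ b) (hab : l a b)
    (hb : Btwn lt u l a b c) :
    BSet lt u l a b = BSet lt u l a c ∪ BSet lt u l c b := by
  have Na := l_not hsce hne hab
  rcases hb with ⟨h', _⟩ | ⟨h', _⟩ | ⟨_, h⟩ | ⟨h', _⟩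
  · exact absurd h' Na.1
  · exact absurd h' Na.2.1
  · rcases h with ⟨p, q⟩ | ⟨p, q⟩
    · exact casel hirr htr hsce hne hab p q
    · have key := casel hirr htr hsce (Ne.symm hne) (hsce.l_symm a b hab) p q
      rw [show BSet lt u l a b = BSet lt u l b a from bset_comm hsce, key,
        show BSet lt u l b c = BSet lt u l c b from bset_comm hsce,
        show BSet lt u l c a = BSet lt u l a c from bset_comm hsce, Set.union_comm]
  · exact absurd h' Na.2.2

theorem main (hirr : ∀ x : S, ¬ lt x x) (htr : ∀ {x y z : S}, lt x y → lt y z → lt x z)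
    (hsce : IsSCExt lt u l) (a b c : S) :
    c ∈ BSet lt u l a b ↔ BSet lt u l a b = BSet lt u l a c ∪ BSet lt u l c b := by
  constructor
  · intro hc
    rcases mem_bset.mp hc with rfl | rfl | ⟨hne, hb⟩
    · rw [bset_self]
      exact (Set.union_eq_self_of_subset_left (Set.singleton_subset_iff.mpr left_mem)).symm
    · rw [bset_self]
      exact (Set.union_eq_self_of_subset_right (Set.singleton_subset_iff.mpr right_mem)).symm
    · rcases rel5 hsce hne with hab | hba | hu | hl
      · exact case_lt hirr htr hsce hab hb
      · have hb' : Btwn lt u l b a c := (btwn_comm hsce).mp hb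
        have key := case_lt hirr htr hsce hba hb'
        rw [show BSet lt u l a b = BSet lt u l b a from bset_comm hsce, key,
          show BSet lt u l b c = BSet lt u l c b from bset_comm hsce,
          show BSet lt u l c a = BSet lt u l a c from bset_comm hsce, Set.union_comm]
      · have hd := sce_dual hsce
        have htr' : ∀ {x y z : S}, flip lt x y → flip lt y z → flip lt x z :=
          fun h1 h2 => htr h2 h1
        have hb' : Btwn (flip lt) l u a b c := (btwn_dual hsce).mpr hb
        have key := case_l (lt := flip lt) hirr htr' hd hne hu hb'
        rw [bset_dual hsce, bset_dual hsce, bset_dual hsce] at key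
        exact key
      · exact case_l hirr htr hsce hne hl hb
  · intro h
    rw [h]
    exact Set.mem_union_left _ right_mem

end Main

/-- `c ∈ B_{a,b}` iff `B_{a,b} = B_{a,c} ∪ B_{c,b}`. -/
theorem stmt3 {S : Type*} [PartialOrder S] (u l : S → S → Prop)
    (hsce : IsSCExt ((· < ·) : S → S → Prop) u l) (a b c : S) :
    c ∈ BSet ((· < ·) : S → S → Prop) u l a b ↔
      BSet ((· < ·) : S → S → Prop) u l a b =
        BSet ((· < ·) : S → S → Prop) u l a c ∪ BSet ((· < ·) : S → S → Prop) u l c b :=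
  main (fun x => lt_irrefl x) (fun h1 h2 => lt_trans h1 h2) hsce a b c

end PaperSC
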